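/- Let t be a finite rooted tree in which every node has at most two children. Then dim(t) = height(t) if and only if t is a perfect binary tree (i.e., t equals B(height(t)), where B(0) is a leaf and B(h+1) is a node with two children B(h), B(h)). In particular, if such a tree t is not a perfect binary tree, then dim(t) < height(t). -/
import Mathlib


/-- A finite rooted tree with labels in `β` and an ordered list of subtrees. -/
inductive RTree (β : Type) where
  | node (label : β) (children : List (RTree β))

/-- The tree dimension: `0` for a leaf; otherwise the maximum of the children's
dimensions if it is attained by a unique child, and that maximum plus one otherwise. -/
def RTree.dim {β : Type} : RTree β → ℕ
  | .node _ ts =>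
    let ds := ts.attach.map fun t => RTree.dim t.1
    if ds = [] then 0
    else if ds.count (ds.foldr max 0) = 1 then ds.foldr max 0
    else ds.foldr max 0 + 1
decreasing_by
  have := List.sizeOf_lt_of_mem t.2
  simp only [RTree.node.sizeOf_spec]
  omega

/-- The height of a tree: `0` for a leaf, otherwise one plus the maximum child height. -/
def RTree.height {β : Type} : RTree β → ℕ
  | .node _ ts =>
    let hs := ts.attach.map fun t => RTree.height t.1
    if hs = [] then 0 else hs.foldr max 0 + 1
decreasing_by
  have := List.sizeOf_lt_of_mem t.2
  simp only [RTree.node.sizeOf_spec]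
  omega

/-- The perfect binary tree of height `h`: `B(0)` is a leaf and `B(h+1)` is a node
whose two children are copies of `B(h)`. -/
def perfectBinary : ℕ → RTree Unit
  | 0 => .node () []
  | h + 1 => .node () [perfectBinary h, perfectBinary h]

/-- A tree in which every node has at most two children. -/
inductive RTree.AtMostTwo {β : Type} : RTree β → Prop
  | node (l : β) (ts : List (RTree β)) :
      ts.length ≤ 2 → (∀ t ∈ ts, RTree.AtMostTwo t) → RTree.AtMostTwo (.node l ts)

theorem dim_nil (l : Unit) : RTree.dim (.node l []) = 0 := by rw [RTree.dim]; simp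

theorem dim_one (l : Unit) (a : RTree Unit) : RTree.dim (.node l [a]) = a.dim := by
  rw [RTree.dim]; simp

theorem dim_two (l : Unit) (a b : RTree Unit) : RTree.dim (.node l [a,b]) =
    (if a.dim = b.dim then a.dim + 1 else max a.dim b.dim) := by
  rw [RTree.dim]
  simp only [List.attach, List.attachWith, List.map_cons, List.map_nil,
    List.pmap, List.count_cons, List.count_nil, List.foldr, reduceCtorEq, if_false, beq_iff_eq]
  split_ifs <;> omega

theorem height_nil (l : Unit) : RTree.height (.node l []) = 0 := by rw [RTree.height]; simp

theorem height_one (l : Unit) (a : RTree Unit) :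
    RTree.height (.node l [a]) = a.height + 1 := by rw [RTree.height]; simp

theorem height_two (l : Unit) (a b : RTree Unit) :
    RTree.height (.node l [a,b]) = max a.height b.height + 1 := by
  rw [RTree.height]
  simp only [List.attach, List.attachWith, List.map_cons, List.map_nil,
    List.pmap, List.foldr, reduceCtorEq, if_false]
  omega

theorem perfect_height (h : ℕ) : (perfectBinary h).height = h := by
  induction h with
  | zero => exact height_nil ()
  | succ n ih => rw [perfectBinary, height_two, ih]; omega

theorem perfect_dim (h : ℕ) : (perfectBinary h).dim = h := by
  induction h with
  | zero => exact dim_nil ()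
  | succ n ih => rw [perfectBinary, dim_two, if_pos rfl, ih]

theorem main_lemma (t : RTree Unit) (ht : t.AtMostTwo) :
    t.dim ≤ t.height ∧ (t.dim = t.height → t = perfectBinary t.height) := by
  induction ht with
  | node l ts hlen hts ih =>
    cases l
    rcases ts with _ | ⟨a, _ | ⟨b, _ | ⟨c, ts⟩⟩⟩
    · refine ⟨by simp [dim_nil, height_nil], fun _ => ?_⟩
      rw [height_nil]; rfl
    · have iha := ih a (by simp)
      rw [dim_one, height_one]
      exact ⟨by omega, fun h => by omega⟩
    · have iha := ih a (by simp)
      have ihb := ih b (by simp)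
      rw [dim_two, height_two]
      split_ifs with hd
      · refine ⟨by omega, fun h => ?_⟩
        have ha : a.dim = a.height := by omega
        have hb : b.dim = b.height := by omega
        have hab : a.height = b.height := by omega
        have ea := iha.2 ha
        have eb := ihb.2 hb
        have : max a.height b.height = a.height := by omega
        rw [this, perfectBinary, ea, eb, hab, perfect_height]
      · exact ⟨by omega, fun h => by omega⟩
    · simp at hlen

/-- for a tree whose nodes have at most two children,
`dim t = height t` iff `t` is the perfect binary tree of its height;
in particular, if `t` is not perfect then `dim t < height t`. -/
theorem dim_eq_height_iff_perfect (t : RTree Unit) (ht : t.AtMostTwo) :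
    (t.dim = t.height ↔ t = perfectBinary t.height) ∧
    (t ≠ perfectBinary t.height → t.dim < t.height) := by
  obtain ⟨hle, hkey⟩ := main_lemma t ht
  refine ⟨⟨hkey, fun h => ?_⟩, fun hne => lt_of_le_of_ne hle fun he => hne (hkey he)⟩
  conv_lhs => rw [h]
  rw [perfect_dim]
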